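/- Let π ∈ [0,1]^n satisfy 1 = π_1 ≥ π_2 ≥ … ≥ π_n ≥ 0, with the convention π_{n+1} := 0, and define p_i := Σ_{j=i}^n (π_j − π_{j+1})/j for i = 1,…,n. Then: (a) p ∈ Δ_n, i.e. all p_i ≥ 0 and Σ_{i=1}^n p_i = 1; (b) p_1 ≥ p_2 ≥ … ≥ p_n; (c) the antipignistic transform of p recovers π, i.e. i·p_i + Σ_{j=i+1}^n p_j = π_i for every i = 1,…,n. -/

import Mathlib

/-- Let `π ∈ [0,1]^n` satisfy `1 = π_1 ≥ π_2 ≥ … ≥ π_n ≥ 0`, with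
convention `π_{n+1} := 0`, and define `p_i := ∑_{j=i}^n (π_j − π_{j+1})/j` (1-based).
Here 0-based: `π i` for `i < n` are the entries, `π n = 0` the convention, the
monotonicity hypothesis for `i = n-1` expresses `π_n ≥ 0`, and
`p i = ∑_{j=i}^{n-1} (π j − π (j+1))/(j+1)`.  Then:
(a) `p ∈ Δ_n`; (b) `p` is nonincreasing; (c) the antipignistic transform of `p`
recovers `π`: `(i+1)·p i + ∑_{j=i+1}^{n-1} p j = π i` for every `i < n`. -/
theorem stmt_3 (n : ℕ) (hn : 0 < n) (π : ℕ → ℝ)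
    (hπ0 : π 0 = 1) (hπn : π n = 0)
    (hπdec : ∀ i, i < n → π (i + 1) ≤ π i)
    (p : ℕ → ℝ)
    (hp : ∀ i, i < n → p i = ∑ j ∈ Finset.Ico i n, (π j - π (j + 1)) / ((j : ℝ) + 1)) :
    ((∀ i, i < n → 0 ≤ p i) ∧ ∑ i ∈ Finset.range n, p i = 1) ∧
    (∀ i, i + 1 < n → p (i + 1) ≤ p i) ∧
    (∀ i, i < n →
        ((i : ℝ) + 1) * p i + ∑ j ∈ Finset.Ico (i + 1) n, p j = π i) := by
  -- each summand is nonnegative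
  have hterm : ∀ j, j < n → 0 ≤ (π j - π (j + 1)) / ((j : ℝ) + 1) := by
    intro j hj
    apply div_nonneg
    · linarith [hπdec j hj]
    · positivity
  have hnonneg : ∀ i, i < n → 0 ≤ p i := by
    intro i hi
    rw [hp i hi]
    apply Finset.sum_nonneg
    intro j hj
    exact hterm j (Finset.mem_Ico.mp hj).2
  -- split of p i
  have hsplit : ∀ i, i < n →
      p i = (π i - π (i + 1)) / ((i : ℝ) + 1) + ∑ j ∈ Finset.Ico (i + 1) n,
        (π j - π (j + 1)) / ((j : ℝ) + 1) := by
    intro i hi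
    rw [hp i hi, Finset.sum_eq_sum_Ico_succ_bot hi]
  -- key part (c), by induction on n - i
  have key : ∀ k i, i < n → n - i = k + 1 →
      ((i : ℝ) + 1) * p i + ∑ j ∈ Finset.Ico (i + 1) n, p j = π i := by
    intro k
    induction k with
    | zero =>
      intro i hi h
      have hni : n = i + 1 := by omega
      have h1 : (Finset.Ico (i + 1) n) = ∅ := by
        rw [hni]; simp
      rw [h1, Finset.sum_empty, hp i hi, hni]
      rw [show Finset.Ico i (i + 1) = {i} from by simp]
      rw [Finset.sum_singleton]
      have : π (i + 1) = 0 := by rw [← hni]; exact hπn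
      rw [this]
      have hne : ((i : ℝ) + 1) ≠ 0 := by positivity
      field_simp
      ring
    | succ k ih =>
      intro i hi h
      have hi1 : i + 1 < n := by omega
      have hrec := ih (i + 1) hi1 (by omega)
      rw [Finset.sum_eq_sum_Ico_succ_bot hi1]
      have hpi : p i = (π i - π (i + 1)) / ((i : ℝ) + 1) + p (i + 1) := by
        rw [hsplit i (by omega), ← hp (i + 1) hi1]
      rw [hpi]
      have hne : ((i : ℝ) + 1) ≠ 0 := by positivity
      push_cast at hrec ⊢
      field_simp at hrec ⊢
      nlinarith [hrec]
  have keyc : ∀ i, i < n →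
      ((i : ℝ) + 1) * p i + ∑ j ∈ Finset.Ico (i + 1) n, p j = π i := by
    intro i hi
    exact key (n - i - 1) i hi (by omega)
  refine ⟨⟨hnonneg, ?_⟩, ?_, keyc⟩
  · have h0 := keyc 0 hn
    rw [Finset.range_eq_Ico, Finset.sum_eq_sum_Ico_succ_bot hn]
    simp at h0
    rw [hπ0] at h0
    linarith [h0]
  · intro i hi
    have hpi : p i = (π i - π (i + 1)) / ((i : ℝ) + 1) + p (i + 1) := by
      rw [hsplit i (by omega), ← hp (i + 1) hi]
    rw [hpi]
    have := hterm i (by omega)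
    linarith
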